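/- One step of the bottom-up algorithm transforms level k into level k+1: let h : List X → Y and g : List Y → Y satisfy h ys = g (List.map h (subs ys)) for every list ys with 2 ≤ length ys. Then for every list xs : List X and every k with 1 ≤ k and k < length xs, mapB g (up (mapB h (ch k xs))) = mapB h (ch (k+1) xs). -/

import Mathlib

def subs {α : Type} : List α → List (List α)
  | [] => []
  | x :: xs => (subs xs).map (x :: ·) ++ [xs]

def choose {α : Type} : ℕ → List α → List (List α)
  | 0, _ => [[]]
  | k+1, xs =>
    if k + 1 = xs.length then [xs]
    else
      match xs with
      | [] => []
      | x :: xs' => (choose k xs').map (x :: ·) ++ choose (k+1) xs'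

inductive B (α : Type) : Type
  | T : α → B α
  | N : B α → B α → B α

def mapB {α β : Type} (f : α → β) : B α → B β
  | .T a => .T (f a)
  | .N t u => .N (mapB f t) (mapB f u)

def zipBW {α β γ : Type} (f : α → β → γ) : B α → B β → B γ
  | .T a, .T b => .T (f a b)
  | .N t u, .N t' u' => .N (zipBW f t t') (zipBW f u u')
  | .T a, v => mapB (f a) v
  | v, .T b => mapB (f · b) v

def ch {α : Type} : ℕ → List α → B (List α)
  | 0, _ => .T []
  | k+1, xs =>
    if k + 1 = xs.length then .T xs
    else
      match xs with
      | [] => .T []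
      | x :: xs' => .N (mapB (x :: ·) (ch k xs')) (ch (k+1) xs')

def snoc {α : Type} (ys : List α) (z : α) : List α := ys ++ [z]

def unT {α : Type} [Inhabited α] : B α → α
  | .T p => p
  | .N _ _ => default

def up {α : Type} : B α → B (List α)
  | .N (.T p) (.T q) => .T [p, q]
  | .N t (.T q) => .T (unT (up t) ++ [q])
  | .N (.T p) u => .N (mapB (fun q => [p, q]) u) (up u)
  | .N t u => .N (zipBW snoc (up t) u) (up u)
  | .T p => .T [p]

def ex {α : Type} [Inhabited α] : List α → α
  | [x] => x
  | _ => default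

def td {X Y : Type} [Inhabited X] [Inhabited Y] (f : X → Y) (g : List Y → Y) : ℕ → List X → Y
  | 0, xs => f (ex xs)
  | n+1, xs => g ((subs xs).map (td f g n))

def td' {Y : Type} [Inhabited Y] (g : List Y → Y) : ℕ → List Y → Y
  | 0, xs => ex xs
  | n+1, xs => g ((subs xs).map (td' g n))

theorem mapB_mapB {α β γ : Type} (f : β → γ) (g : α → β) (t : B α) :
    mapB f (mapB g t) = mapB (fun a => f (g a)) t := by
  induction t with
  | T a => rfl
  | N l r ihl ihr => simp [mapB, ihl, ihr]

theorem unT_mapB {α β : Type} (f : α → β) (t : B (List α)) :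
    unT (mapB (List.map f) t) = List.map f (unT t) := by
  cases t <;> simp [mapB, unT, default]

theorem zipBW_snoc_mapB {α β : Type} (f : α → β) (a : B (List α)) (b : B α) :
    zipBW snoc (mapB (List.map f) a) (mapB f b) = mapB (List.map f) (zipBW snoc a b) := by
  induction a generalizing b with
  | T p =>
    induction b with
    | T q => simp [mapB, zipBW, snoc]
    | N l r ihl ihr =>
      simp only [mapB, zipBW]
      simp [mapB_mapB, snoc]
  | N l r ihl ihr =>
    cases b with
    | T q => simp [mapB, zipBW, snoc, mapB_mapB]
    | N l' r' => simp [mapB, zipBW, ihl, ihr]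

theorem up_mapB {α β : Type} (f : α → β) (t : B α) :
    up (mapB f t) = mapB (List.map f) (up t) := by
  induction t with
  | T p => rfl
  | N l r ihl ihr =>
    cases l with
    | T p =>
      cases r with
      | T q => rfl
      | N r1 r2 =>
        simp only [mapB] at ihr ⊢
        simp only [up, ihr]
        simp [mapB, mapB_mapB]
    | N l1 l2 =>
      cases r with
      | T q =>
        simp only [mapB] at ihl ⊢
        simp [up, ihl, unT_mapB, mapB]
      | N r1 r2 =>
        simp only [mapB] at ihl ihr ⊢
        simp only [up, mapB, ihl, ihr]
        have := zipBW_snoc_mapB f (up (l1.N l2)) (r1.N r2)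
        simp only [mapB] at this
        rw [this]

theorem zipBW_snoc_self {α : Type} (f : List α → List (List α)) (t : B (List α)) :
    zipBW snoc (mapB f t) t = mapB (fun ys => f ys ++ [ys]) t := by
  induction t with
  | T p => rfl
  | N l r ihl ihr => simp [mapB, zipBW, ihl, ihr]

theorem ch_succ_eq {α : Type} (k : ℕ) (xs : List α) (hk : k + 1 = xs.length) :
    ch (k+1) xs = .T xs := by rw [ch.eq_def]; simp [hk]

theorem ch_succ_ne {α : Type} (k : ℕ) (x : α) (xs : List α) (hk : k + 1 ≠ (x :: xs).length) :
    ch (k+1) (x :: xs) = .N (mapB (x :: ·) (ch k xs)) (ch (k+1) xs) := by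
  have hk' : ¬ k = xs.length := by simp only [List.length_cons] at hk; omega
  rw [ch.eq_def]; simp [hk']

theorem ch_node {α : Type} (k : ℕ) (xs : List α) (h1 : 1 ≤ k) (h2 : k < xs.length) :
    ∃ a b, ch k xs = B.N a b := by
  obtain ⟨k, rfl⟩ := Nat.exists_eq_add_of_le h1
  cases xs with
  | nil => simp at h2
  | cons x xs' =>
    rw [Nat.add_comm] at h2 ⊢
    rw [ch_succ_ne _ _ _ (Nat.ne_of_lt h2)]
    exact ⟨_, _, rfl⟩

theorem mapB_ch_congr {α β : Type} (f f' : List α → β) :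
    ∀ (xs : List α) (k : ℕ), k ≤ xs.length → (∀ ys : List α, ys.length = k → f ys = f' ys) →
    mapB f (ch k xs) = mapB f' (ch k xs)
  | xs, 0, _, hf => by simp [ch, mapB, hf [] rfl]
  | xs, k+1, hk, hf => by
    by_cases he : k + 1 = xs.length
    · rw [ch_succ_eq _ _ he]; simp only [mapB, hf xs he.symm]
    · cases xs with
      | nil => simp at hk
      | cons x xs' =>
        rw [ch_succ_ne _ _ _ he]
        simp only [mapB, mapB_mapB]
        rw [mapB_ch_congr (fun a => f (x :: a)) (fun a => f' (x :: a)) xs' k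
            (by simp at hk he; omega) (fun ys hy => hf (x :: ys) (by simp [hy])),
          mapB_ch_congr f f' xs' (k+1) (by simp at hk he; omega) hf]

theorem up_ch {α : Type} : ∀ (xs : List α) (k : ℕ), 1 ≤ k → k < xs.length →
    up (ch k xs) = mapB subs (ch (k+1) xs) := by
  intro xs
  induction xs with
  | nil => intro k h1 h2; simp at h2
  | cons x xs' ih =>
    intro k h1 h2
    obtain ⟨k', rfl⟩ : ∃ k', k = k' + 1 := ⟨k - 1, by omega⟩
    have hne : k' + 1 ≠ (x :: xs').length := Nat.ne_of_lt h2
    rw [ch_succ_ne _ _ _ hne]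
    rcases Nat.lt_or_ge (k' + 1) xs'.length with hB | hA
    · -- k < length xs'
      have hne2 : k' + 1 + 1 ≠ (x :: xs').length := by
        simp only [List.length_cons]; omega
      rw [ch_succ_ne _ _ _ hne2]
      obtain ⟨c, d, hcd⟩ := ch_node (k' + 1) xs' (by omega) hB
      rcases Nat.eq_zero_or_pos k' with rfl | hk'
      · -- k = 1
        have e2 : mapB (fun q => [[x], q]) (ch (0 + 1) xs') =
            mapB subs (mapB (x :: ·) (ch (0 + 1) xs')) := by
          rw [mapB_mapB]
          exact mapB_ch_congr _ _ xs' (0 + 1) (by omega) (fun ys hy => by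
            obtain ⟨y, rfl⟩ := List.length_eq_one_iff.mp hy
            simp [subs])
        have e3 : up (ch (0 + 1) xs') = mapB subs (ch (0 + 1 + 1) xs') :=
          ih (0 + 1) le_rfl hB
        rw [show ch 0 xs' = B.T ([] : List α) by simp [ch]]
        rw [hcd] at e2 e3 ⊢
        simp only [mapB, up]
        simp only [mapB] at e2 ⊢
        rw [e2, e3]
      · -- k ≥ 2
        have e1 : up (mapB (x :: ·) (ch k' xs')) =
            mapB (fun ys => List.map (x :: ·) (subs ys)) (ch (k' + 1) xs') := by
          rw [up_mapB, ih k' hk' (by omega), mapB_mapB]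
        have e2 : zipBW snoc (up (mapB (x :: ·) (ch k' xs'))) (ch (k' + 1) xs') =
            mapB subs (mapB (x :: ·) (ch (k' + 1) xs')) := by
          rw [e1, zipBW_snoc_self, mapB_mapB]
          exact mapB_ch_congr _ _ xs' (k' + 1) (by omega) (fun ys _ => by simp [subs])
        have e3 : up (ch (k' + 1) xs') = mapB subs (ch (k' + 1 + 1) xs') :=
          ih (k' + 1) (by omega) hB
        obtain ⟨a, b, hab⟩ := ch_node k' xs' hk' (by omega)
        rw [hab, hcd] at e2 ⊢
        rw [hcd] at e3
        simp only [mapB] at e2 ⊢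
        simp only [up]
        try simp only [mapB]
        rw [e2, e3]
    · -- k + 1 = length xs
      have hlen : k' + 1 = xs'.length := by
        simp only [List.length_cons] at h2; omega
      have hch : ch (k' + 1) xs' = B.T xs' := ch_succ_eq _ _ hlen
      have hch2 : ch (k' + 1 + 1) (x :: xs') = B.T (x :: xs') :=
        ch_succ_eq _ _ (by simp [← hlen])
      rw [hch, hch2]
      rcases Nat.eq_zero_or_pos k' with rfl | hk'
      · obtain ⟨y, rfl⟩ := List.length_eq_one_iff.mp hlen.symm
        simp [ch, mapB, up, subs]
      · obtain ⟨a, b, hab⟩ := ch_node k' xs' hk' (by omega)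
        have e1 : up (mapB (x :: ·) (ch k' xs')) = B.T (List.map (x :: ·) (subs xs')) := by
          rw [up_mapB, ih k' hk' (by omega), hch]; rfl
        rw [hab] at e1 ⊢
        simp only [mapB] at e1 ⊢
        simp only [up]
        rw [e1]
        simp [unT, mapB, subs]

theorem stmt9 {X Y : Type} (h : List X → Y) (g : List Y → Y)
    (hg : ∀ ys : List X, 2 ≤ ys.length → h ys = g (List.map h (subs ys)))
    (xs : List X) (k : ℕ) (hk1 : 1 ≤ k) (hk2 : k < xs.length) :
    mapB g (up (mapB h (ch k xs))) = mapB h (ch (k + 1) xs) := by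
  rw [up_mapB, up_ch xs k hk1 hk2, mapB_mapB, mapB_mapB]
  exact mapB_ch_congr _ _ xs (k + 1) (by omega)
    (fun ys hy => (hg ys (by omega)).symm)
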